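/- With the notation of the ReLU kernel map, the derivative of h₂ on (0,a) is h₂'(x) = (σᵣ²/(2π))·arccos(−(σᵣ²x + σᵢ²)/(σᵣ²a + σᵢ²)); in particular h₂'(a) = σᵣ²/2, which is < 1 when σᵣ < √2. -/

import Mathlib

open Real Set

lemma aux_hasDerivAt {c r i : ℝ} (x : ℝ) (hr : 0 < r) (hu0 : 0 < r * x + i)
    (huc : r * x + i < c) :
    HasDerivAt (fun x => 1 / (2 * π) *
      ((r * x + i) * Real.arccos (-((r * x + i) / c)) +
        Real.sqrt (c ^ 2 - (r * x + i) ^ 2)))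
      (r / (2 * π) * Real.arccos (-((r * x + i) / c))) x := by
  have hc0 : 0 < c := hu0.trans huc
  have hdiffpos : 0 < c ^ 2 - (r * x + i) ^ 2 := by nlinarith
  have hlt1 : (r * x + i) / c < 1 := (div_lt_one hc0).2 huc
  have hpos : 0 < (r * x + i) / c := div_pos hu0 hc0
  have hy1 : -((r * x + i) / c) ≠ -1 := by
    intro h; exact hlt1.ne (neg_inj.mp h)
  have hy2 : -((r * x + i) / c) ≠ 1 := by
    intro h; linarith
  have hu : HasDerivAt (fun x => r * x + i) r x := by
    simpa using ((hasDerivAt_id x).const_mul r).add_const i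
  have hg : HasDerivAt (fun x => -((r * x + i) / c)) (-(r / c)) x := by
    exact (hu.div_const c).neg
  have harc : HasDerivAt (fun x => Real.arccos (-((r * x + i) / c)))
      (-(1 / Real.sqrt (1 - (-((r * x + i) / c)) ^ 2)) * -(r / c)) x := by
    have := (Real.hasDerivAt_arccos hy1 hy2).comp x hg; exact this
  have hin : HasDerivAt (fun x => c ^ 2 - (r * x + i) ^ 2) (-(2 * (r * x + i) * r)) x := by
    have := (hu.pow 2).const_sub (c ^ 2)
    refine this.congr_deriv ?_
    push_cast
    ring
  have hsq := hin.sqrt (ne_of_gt hdiffpos)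
  have hmain := ((hu.mul harc).add hsq).const_mul (1 / (2 * π))
  have hs1 : Real.sqrt (1 - (-((r * x + i) / c)) ^ 2) =
      Real.sqrt (c ^ 2 - (r * x + i) ^ 2) / c := by
    rw [neg_sq, show (1 : ℝ) - ((r * x + i) / c) ^ 2 = (c ^ 2 - (r * x + i) ^ 2) / c ^ 2 by
      field_simp]
    rw [Real.sqrt_div hdiffpos.le, Real.sqrt_sq hc0.le]
  have hsqrt0 : 0 < Real.sqrt (c ^ 2 - (r * x + i) ^ 2) := Real.sqrt_pos.2 hdiffpos
  refine hmain.congr_deriv ?_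
  rw [hs1]
  field_simp
  ring

theorem stmt_14 (σr σi : ℝ) (hr : 0 < σr) (hr2 : σr ^ 2 < 2) (hi : 0 < σi)
    (a : ℝ) (ha : a = σi ^ 2 / (2 - σr ^ 2))
    (h₂ : ℝ → ℝ)
    (hdef : ∀ x, h₂ x = 1 / (2 * π) *
      ((σr ^ 2 * x + σi ^ 2) *
          Real.arccos (-((σr ^ 2 * x + σi ^ 2) / (σr ^ 2 * a + σi ^ 2))) +
        Real.sqrt ((σr ^ 2 * a + σi ^ 2) ^ 2 - (σr ^ 2 * x + σi ^ 2) ^ 2))) :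
    (∀ x ∈ Set.Ioo (0 : ℝ) a,
      HasDerivAt h₂
        (σr ^ 2 / (2 * π) *
          Real.arccos (-((σr ^ 2 * x + σi ^ 2) / (σr ^ 2 * a + σi ^ 2)))) x) ∧
      derivWithin h₂ (Set.Icc (0 : ℝ) a) a = σr ^ 2 / 2 ∧ σr ^ 2 / 2 < 1 := by
  have hfun : h₂ = fun x => 1 / (2 * π) *
      ((σr ^ 2 * x + σi ^ 2) *
          Real.arccos (-((σr ^ 2 * x + σi ^ 2) / (σr ^ 2 * a + σi ^ 2))) +
        Real.sqrt ((σr ^ 2 * a + σi ^ 2) ^ 2 - (σr ^ 2 * x + σi ^ 2) ^ 2)) := funext hdef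
  subst hfun
  have h2r : (0:ℝ) < 2 - σr ^ 2 := by linarith
  have hσr : 0 < σr ^ 2 := by positivity
  have hσi : 0 < σi ^ 2 := by positivity
  have ha0 : 0 < a := by rw [ha]; positivity
  have hc0 : 0 < σr ^ 2 * a + σi ^ 2 := by positivity
  have key : ∀ x ∈ Set.Ioo (0 : ℝ) a,
      HasDerivAt (fun x => 1 / (2 * π) *
        ((σr ^ 2 * x + σi ^ 2) *
            Real.arccos (-((σr ^ 2 * x + σi ^ 2) / (σr ^ 2 * a + σi ^ 2))) +
          Real.sqrt ((σr ^ 2 * a + σi ^ 2) ^ 2 - (σr ^ 2 * x + σi ^ 2) ^ 2)))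
        (σr ^ 2 / (2 * π) *
          Real.arccos (-((σr ^ 2 * x + σi ^ 2) / (σr ^ 2 * a + σi ^ 2)))) x := by
    intro x hx
    refine aux_hasDerivAt x hσr ?_ ?_
    · nlinarith [hx.1]
    · nlinarith [hx.2]
  refine ⟨key, ?_, by linarith⟩
  set F : ℝ → ℝ := fun x => 1 / (2 * π) *
      ((σr ^ 2 * x + σi ^ 2) *
          Real.arccos (-((σr ^ 2 * x + σi ^ 2) / (σr ^ 2 * a + σi ^ 2))) +
        Real.sqrt ((σr ^ 2 * a + σi ^ 2) ^ 2 - (σr ^ 2 * x + σi ^ 2) ^ 2)) with hF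
  have hcont : Continuous F := by
    apply Continuous.mul continuous_const
    apply Continuous.add
    · exact (continuous_const.mul continuous_id |>.add continuous_const).mul
        (Real.continuous_arccos.comp
          (((continuous_const.mul continuous_id |>.add continuous_const).div_const _).neg))
    · exact Real.continuous_sqrt.comp
        (continuous_const.sub (((continuous_const.mul continuous_id |>.add
          continuous_const).pow 2)))
  have hmem : Set.Ioo (0 : ℝ) a ∈ nhdsWithin a (Set.Iio a) :=
    Ioo_mem_nhdsLT_of_mem ⟨ha0, le_rfl⟩
  have htend : Filter.Tendsto (fun x => deriv F x) (nhdsWithin a (Set.Iio a))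
      (nhds (σr ^ 2 / 2)) := by
    have heq : ∀ᶠ x in nhdsWithin a (Set.Iio a), (σr ^ 2 / (2 * π) *
        Real.arccos (-((σr ^ 2 * x + σi ^ 2) / (σr ^ 2 * a + σi ^ 2)))) = deriv F x := by
      filter_upwards [hmem] with x hx
      exact ((key x hx).deriv).symm
    have hφ : Filter.Tendsto (fun x => σr ^ 2 / (2 * π) *
        Real.arccos (-((σr ^ 2 * x + σi ^ 2) / (σr ^ 2 * a + σi ^ 2))))
        (nhdsWithin a (Set.Iio a)) (nhds (σr ^ 2 / 2)) := by
      have hca : ContinuousAt (fun x => σr ^ 2 / (2 * π) *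
          Real.arccos (-((σr ^ 2 * x + σi ^ 2) / (σr ^ 2 * a + σi ^ 2)))) a := by
        apply ContinuousAt.mul continuousAt_const
        exact Real.continuous_arccos.continuousAt.comp
          ((((continuousAt_const.mul continuousAt_id).add continuousAt_const).div_const
            _).neg)
      have hval : σr ^ 2 / (2 * π) *
          Real.arccos (-((σr ^ 2 * a + σi ^ 2) / (σr ^ 2 * a + σi ^ 2))) = σr ^ 2 / 2 := by
        rw [div_self hc0.ne', Real.arccos_neg_one]
        field_simp [Real.pi_ne_zero]
      have := hca.tendsto.mono_left (nhdsWithin_le_nhds (s := Set.Iio a))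
      rwa [hval] at this
    exact Filter.Tendsto.congr' heq hφ
  have hIic : HasDerivWithinAt F (σr ^ 2 / 2) (Set.Iic a) a := by
    apply hasDerivWithinAt_Iic_of_tendsto_deriv
      (fun x hx => (key x hx).differentiableAt.differentiableWithinAt)
      hcont.continuousWithinAt hmem htend
  exact (hIic.mono Set.Icc_subset_Iic_self).derivWithin
    (uniqueDiffOn_Icc ha0 a (Set.right_mem_Icc.2 ha0.le))
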